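/- arXiv:2601.05219 — 2 statements merged into one kernel-verified Lean document; each statement's English description precedes it below -/
import Mathlib

section
/- Calibration score dominance: with D_n, the augmented set D_{n+1}^y = D_n ∪ {(X_{n+1},y)}, and one-shot scores s_j as above, for each i ∈ {1,...,n} the full-CAOS calibration score Σ_min^k of the multiset of scores of (X_i,Y_i) under references in D_{n+1}^y minus one occurrence of the self-score s_i(X_i,Y_i), is at most the leave-one-out CAOS calibration score Σ_min^k of the multiset of scores of (X_i,Y_i) under references in D_n \ {(X_i,Y_i)}. -/
/-- Sum of the `k` smallest elements of a multiset of reals. -/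
noncomputable def minSum (k : ℕ) (A : Multiset ℝ) : ℝ :=
  ((A.sort (· ≤ ·)).take k).sum

private lemma sum_take_orderedInsert (a : ℝ) (l : List ℝ) (hl : l.Pairwise (· ≤ ·))
    (k : ℕ) (hk : k ≤ l.length) :
    ((List.orderedInsert (· ≤ ·) a l).take k).sum ≤ (l.take k).sum := by
  rw [List.orderedInsert_eq_take_drop]
  set t := l.takeWhile (fun b => decide (¬ a ≤ b)) with ht
  set d := l.dropWhile (fun b => decide (¬ a ≤ b)) with hd
  have hl' : t ++ d = l := List.takeWhile_append_dropWhile ..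
  have hdsub : List.Sublist d l := hl' ▸ (List.sublist_append_right t d)
  have hdsorted : d.Pairwise (· ≤ ·) := hl.sublist hdsub
  have hlen : t.length + d.length = l.length := by rw [← hl', List.length_append]
  by_cases h : k ≤ t.length
  · rw [List.take_append_of_le_length h]
    conv_rhs => rw [← hl', List.take_append_of_le_length h]
  · push_neg at h
    have hjd : k - t.length ≤ d.length := by omega
    obtain ⟨j, hj⟩ : ∃ j, k - t.length = j + 1 := ⟨k - t.length - 1, by omega⟩
    have hjlt : j < d.length := by omega
    have hdpos : 0 < d.length := by omega
    have hahead : a ≤ d.get ⟨0, hdpos⟩ := by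
      have h0 := List.dropWhile_get_zero_not (fun b => decide (¬ a ≤ b)) l hdpos
      simpa [hd] using h0
    have hall : a ≤ d.get ⟨j, hjlt⟩ :=
      le_trans hahead (hdsorted.rel_get_of_le (by simp))
    rw [List.take_append, List.take_of_length_le (le_of_lt h)]
    conv_rhs => rw [← hl', List.take_append,
      List.take_of_length_le (le_of_lt h)]
    rw [List.sum_append, List.sum_append]
    apply add_le_add_right
    rw [hj, List.take_succ_cons, List.sum_cons, List.sum_take_succ d j hjlt, add_comm]
    exact add_le_add le_rfl hall

private lemma minSum_cons_le (k : ℕ) (a : ℝ) (B : Multiset ℝ)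
    (hk : k ≤ Multiset.card B) : minSum k (a ::ₘ B) ≤ minSum k B := by
  have hsort : (a ::ₘ B).sort (· ≤ ·) = List.orderedInsert (· ≤ ·) a (B.sort (· ≤ ·)) := by
    haveI : IsAntisymm ℝ (fun x1 x2 : ℝ => x1 ≤ x2) := ⟨fun _ _ => le_antisymm⟩
    refine (fun p s1 s2 => List.Perm.eq_of_pairwise' (r := fun x1 x2 : ℝ => x1 ≤ x2) s1 s2 p) ?_ ?_ ?_
    · have h1 : ((a ::ₘ B).sort (· ≤ ·) : Multiset ℝ) = (a :: B.sort (· ≤ ·) : List ℝ) := by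
        rw [← Multiset.cons_coe, Multiset.sort_eq, Multiset.sort_eq]
      have h2 : List.Perm ((a ::ₘ B).sort (· ≤ ·)) (a :: B.sort (· ≤ ·)) := by
        exact_mod_cast Multiset.coe_eq_coe.mp h1
      exact h2.trans (List.perm_orderedInsert _ _ _).symm
    · exact Multiset.pairwise_sort _ _
    · exact (Multiset.pairwise_sort B _).orderedInsert a _
  rw [minSum, minSum, hsort]
  exact sum_take_orderedInsert a _ (Multiset.pairwise_sort B _) k (by simpa using hk)

/-- Calibration score dominance: the full CAOS calibration score of `(X_i, Y_i)`
(computed from references in `D_n ∪ {(X_{n+1}, y)}` with one occurrence of the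
self-score removed) is at most the leave-one-out CAOS calibration score
(computed from references in `D_n \ {(X_i, Y_i)}`). -/
theorem full_caos_calibration_dominance {X Y : Type*} [DecidableEq (X × Y)]
    (k : ℕ) (hk : 1 ≤ k) (s : X × Y → X → Y → ℝ)
    (Dn : Multiset (X × Y)) (e : X × Y) (he : e ∈ Dn)
    (hn : k ≤ Multiset.card (Dn.erase e))
    (xtest : X) (ytest : Y) :
    minSum k ((((xtest, ytest) ::ₘ Dn).map (fun e' => s e' e.1 e.2)) - {s e e.1 e.2}) ≤
      minSum k ((Dn.erase e).map (fun e' => s e' e.1 e.2)) := by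
  set f : X × Y → ℝ := fun e' => s e' e.1 e.2 with hf
  have hmap : Dn.map f = f e ::ₘ (Dn.erase e).map f := by
    rw [← Multiset.map_cons, Multiset.cons_erase he]
  have h1 : ((xtest, ytest) ::ₘ Dn).map f - {f e} = f (xtest, ytest) ::ₘ (Dn.erase e).map f := by
    rw [Multiset.map_cons, Multiset.sub_singleton, hmap, Multiset.cons_swap,
      Multiset.erase_cons_head]
  rw [show ({s e e.1 e.2} : Multiset ℝ) = {f e} from rfl, h1]
  exact minSum_cons_le k _ _ (by simpa using hn)
end

section
/- Deterministic conformal inclusion lemma: for real numbers z_1,...,z_{n+1}, z_{n+1} ≤ Quantile({z_1,...,z_{n+1}}; 1−α) if and only if z_{n+1} ≤ Quantile({z_1,...,z_n}; (1−α)(1+1/n)), where Quantile(S; τ) denotes the min(⌈τ·|S|⌉,|S|)-th order statistic of S, provided ⌈(1−α)(n+1)⌉ ≤ n. -/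
/-- The `j`-th smallest element (1-indexed order statistic) of a multiset of reals. -/
noncomputable def orderStat (A : Multiset ℝ) (j : ℕ) : ℝ :=
  (A.sort (· ≤ ·)).getD (j - 1) 0

/-- Empirical quantile: the `min(⌈τ·|S|⌉, |S|)`-th order statistic of `S`. -/
noncomputable def quantile (S : Multiset ℝ) (τ : ℝ) : ℝ :=
  orderStat S (min ⌈τ * (Multiset.card S : ℝ)⌉₊ (Multiset.card S))

lemma sorted_le_get_iff (l : List ℝ) (hs : l.Pairwise (· ≤ ·)) (a : ℝ) (j : ℕ)
    (hj : j < l.length) :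
    a ≤ l.get ⟨j, hj⟩ ↔ l.countP (fun x => decide (x < a)) ≤ j := by
  induction l generalizing j with
  | nil => simp at hj
  | cons b t ih =>
    have hst : t.Pairwise (· ≤ ·) := hs.of_cons
    rw [List.countP_cons]
    by_cases hba : b < a
    · simp only [hba, decide_eq_true_eq, if_pos]
      cases j with
      | zero =>
        simp only [List.get]
        constructor
        · intro h; exact absurd hba (not_lt.2 h)
        · intro h; omega
      | succ j =>
        simp only [List.get]
        rw [ih hst j (by simpa using hj)]
        omega
    · have hab : a ≤ b := not_lt.1 hba
      have hcount : t.countP (fun x => decide (x < a)) = 0 := by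
        rw [List.countP_eq_zero]
        intro x hx
        simp only [decide_eq_true_eq]
        exact not_lt.2 (le_trans hab ((List.pairwise_cons.1 hs).1 x hx))
      simp only [hcount]
      rw [if_neg (by simpa using hba)]
      constructor
      · intro _; omega
      · intro _
        cases j with
        | zero => exact hab
        | succ j =>
          exact le_trans hab ((List.pairwise_cons.1 hs).1 _
            (List.get_mem t ⟨j, by simpa using hj⟩))

lemma countP_sort (S : Multiset ℝ) (a : ℝ) :
    (S.sort (· ≤ ·)).countP (fun x => decide (x < a)) = Multiset.countP (· < a) S := by
  conv_rhs => rw [← Multiset.sort_eq (r := (· ≤ ·)) (s := S)]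
  rw [Multiset.coe_countP]

lemma le_orderStat_cons_iff (A : Multiset ℝ) (a : ℝ) (k : ℕ) (hk : 1 ≤ k)
    (hk2 : k ≤ Multiset.card A) :
    a ≤ orderStat (a ::ₘ A) k ↔ a ≤ orderStat A k := by
  have h1 : k - 1 < ((a ::ₘ A).sort (· ≤ ·)).length := by
    rw [Multiset.length_sort, Multiset.card_cons]; omega
  have h2 : k - 1 < (A.sort (· ≤ ·)).length := by
    rw [Multiset.length_sort]; omega
  unfold orderStat
  rw [List.getD_eq_get _ _ ⟨_, h1⟩, List.getD_eq_get _ _ ⟨_, h2⟩,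
    sorted_le_get_iff _ (Multiset.pairwise_sort _ _) a _ h1,
    sorted_le_get_iff _ (Multiset.pairwise_sort _ _) a _ h2,
    countP_sort, countP_sort, Multiset.countP_cons, if_neg (lt_irrefl a)]
  simp

/-- Deterministic conformal inclusion lemma: `z_{n+1}` is below the `1-α`
empirical quantile of `z_1,…,z_{n+1}` iff it is below the `(1-α)(1+1/n)`
empirical quantile of `z_1,…,z_n`. -/
theorem conformal_inclusion_lemma (n : ℕ) (hn : 1 ≤ n) (z : Fin (n + 1) → ℝ)
    (α : ℝ) (hα : 0 < α) (hα' : α < 1)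
    (hcap : ⌈(1 - α) * ((n : ℝ) + 1)⌉₊ ≤ n) :
    z (Fin.last n) ≤ quantile (↑(List.ofFn z) : Multiset ℝ) (1 - α) ↔
      z (Fin.last n) ≤
        quantile (↑(List.ofFn (fun i : Fin n => z i.castSucc)) : Multiset ℝ)
          ((1 - α) * (1 + 1 / (n : ℝ))) := by
  set k := ⌈(1 - α) * ((n : ℝ) + 1)⌉₊ with hk
  have hn0 : (n : ℝ) ≠ 0 := Nat.cast_ne_zero.2 (by omega)
  have hk1 : 1 ≤ k := by
    rw [hk, Nat.one_le_iff_ne_zero, ← Nat.pos_iff_ne_zero, Nat.ceil_pos]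
    have : (0:ℝ) < 1 - α := by linarith
    positivity
  have hc1 : Multiset.card (↑(List.ofFn z) : Multiset ℝ) = n + 1 := by
    simp [Multiset.coe_card]
  have hc2 : Multiset.card
      (↑(List.ofFn (fun i : Fin n => z i.castSucc)) : Multiset ℝ) = n := by
    simp [Multiset.coe_card]
  have hτ : (1 - α) * (1 + 1 / (n : ℝ)) * (n : ℝ) = (1 - α) * ((n : ℝ) + 1) := by
    field_simp
  have hS : (↑(List.ofFn z) : Multiset ℝ)
      = z (Fin.last n) ::ₘ ↑(List.ofFn (fun i : Fin n => z i.castSucc)) := by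
    rw [List.ofFn_succ']
    simp [List.concat_eq_append]
  unfold quantile
  rw [hc1, hc2, hτ, hS]
  have hm1 : min ⌈(1 - α) * ((n:ℝ) + 1 : ℝ)⌉₊ (n + 1) = k := by
    rw [← hk]; omega
  have hm2 : min ⌈(1 - α) * ((n:ℝ) + 1 : ℝ)⌉₊ n = k := by
    rw [← hk]; omega
  push_cast
  rw [hm1, hm2]
  exact le_orderStat_cons_iff _ _ k hk1 (by rw [hc2]; exact hcap)
end
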